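/- Let G be a finite graph with Laplacian L, U ⊂ V with S = V∖S a Λ-set, ε > 0, and k = 2^l, l ∈ ℕ. If Y_{k,ε}^{U,f} denotes the variational spline interpolating f on U, then ‖f − Y_{k,ε}^{U,f}‖ ≤ 2 Λ^k ‖(εI+L)^k f‖ for every f ∈ L₂(G). -/

import Mathlib

open Matrix

/-- The ℓ²-norm of a function on the vertices of a finite graph. -/
noncomputable def gnorm {V : Type*} [Fintype V] (f : V → ℝ) : ℝ :=
  Real.sqrt (∑ v, f v ^ 2)

/-- The operator `εI + L` used in the definition of variational splines. -/
noncomputable def splineOp {V : Type*} [Fintype V] [DecidableEq V]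
    (G : SimpleGraph V) [DecidableRel G.Adj] (ε : ℝ) : Matrix V V ℝ :=
  ε • (1 : Matrix V V ℝ) + G.lapMatrix ℝ

section aux
variable {V : Type*} [Fintype V]

lemma gnorm_eq (f : V → ℝ) : gnorm f = Real.sqrt (f ⬝ᵥ f) := by
  simp [gnorm, dotProduct, sq]

lemma gnorm_nonneg (f : V → ℝ) : 0 ≤ gnorm f := Real.sqrt_nonneg _

lemma dot_self_nonneg (f : V → ℝ) : 0 ≤ f ⬝ᵥ f :=
  Finset.sum_nonneg fun v _ => mul_self_nonneg _

lemma gnorm_mul_self (f : V → ℝ) : gnorm f * gnorm f = f ⬝ᵥ f := by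
  rw [gnorm_eq]; exact Real.mul_self_sqrt (dot_self_nonneg f)

lemma gnorm_eq_norm (f : V → ℝ) : gnorm f = ‖(WithLp.toLp 2 f : EuclideanSpace ℝ V)‖ := by
  rw [EuclideanSpace.norm_eq]
  simp [gnorm, sq_abs]

lemma dot_le_gnorm (f g : V → ℝ) : f ⬝ᵥ g ≤ gnorm f * gnorm g := by
  rw [gnorm_eq_norm, gnorm_eq_norm]
  have h : f ⬝ᵥ g = inner ℝ (WithLp.toLp 2 f : EuclideanSpace ℝ V) (WithLp.toLp 2 g : EuclideanSpace ℝ V) := by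
    simp [PiLp.inner_apply, dotProduct, RCLike.inner_apply, mul_comm]
  rw [h]
  exact real_inner_le_norm _ _

lemma gnorm_sub_le (f g : V → ℝ) : gnorm (f - g) ≤ gnorm f + gnorm g := by
  rw [gnorm_eq_norm, gnorm_eq_norm, gnorm_eq_norm]
  exact norm_sub_le _ _

lemma gnorm_mono {f g : V → ℝ} (h : f ⬝ᵥ f ≤ g ⬝ᵥ g) : gnorm f ≤ gnorm g := by
  rw [gnorm_eq, gnorm_eq]; exact Real.sqrt_le_sqrt h

lemma doubling {M : Matrix V V ℝ} (hM : Mᵀ = M) {c : ℝ} (hc : 0 ≤ c) (φ : V → ℝ)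
    (h : gnorm φ ≤ c * gnorm (M.mulVec φ)) :
    gnorm φ ≤ c ^ 2 * gnorm ((M * M).mulVec φ) := by
  have key : (M.mulVec φ) ⬝ᵥ (M.mulVec φ) = φ ⬝ᵥ ((M * M).mulVec φ) := by
    rw [← mulVec_mulVec, dotProduct_mulVec, ← mulVec_transpose, hM]
    exact dotProduct_comm _ _
  set a := gnorm φ with ha
  set b := gnorm (M.mulVec φ) with hb
  set d := gnorm ((M * M).mulVec φ) with hd
  have hbb : b * b ≤ a * d := by
    rw [gnorm_mul_self, key]; exact dot_le_gnorm _ _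
  have h0a : 0 ≤ a := gnorm_nonneg _
  have h0b : 0 ≤ b := gnorm_nonneg _
  have h0d : 0 ≤ d := gnorm_nonneg _
  rcases eq_or_lt_of_le h0a with h0 | h0
  · rw [← h0]; positivity
  · have haa : a * a ≤ c ^ 2 * (a * d) := by
      calc a * a ≤ (c * b) * (c * b) := mul_le_mul h h h0a (le_trans h0a h)
        _ = c ^ 2 * (b * b) := by ring
        _ ≤ c ^ 2 * (a * d) := by nlinarith
    nlinarith
end aux

/-- If `S = V \ U` is a `Λ`-set and `k = 2^l`, then the variational spline `Y`
interpolating `f` on `U` satisfies `‖f − Y‖ ≤ 2 Λ^k ‖(εI+L)^k f‖`. -/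
theorem stmt_8 {V : Type*} [Fintype V] [DecidableEq V]
    (G : SimpleGraph V) [DecidableRel G.Adj]
    (U : Finset V) (Λ : ℝ) (hΛ : 0 < Λ)
    (hS : ∀ φ : V → ℝ, (∀ v ∈ U, φ v = 0) →
      gnorm φ ≤ Λ * gnorm ((G.lapMatrix ℝ).mulVec φ))
    (ε : ℝ) (hε : 0 < ε) (l : ℕ)
    (f Y : V → ℝ)
    (hYI : ∀ u ∈ U, Y u = f u)
    (hYM : ∀ Z : V → ℝ, (∀ u ∈ U, Z u = f u) →
      gnorm (((splineOp G ε) ^ (2 ^ l)).mulVec Y) ≤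
        gnorm (((splineOp G ε) ^ (2 ^ l)).mulVec Z)) :
    gnorm (f - Y) ≤ 2 * Λ ^ (2 ^ l) * gnorm (((splineOp G ε) ^ (2 ^ l)).mulVec f) := by
  set A := splineOp G ε with hA
  set φ := f - Y with hφ
  have hφ0 : ∀ v ∈ U, φ v = 0 := fun v hv => by
    simp [hφ, hYI v hv]
  have hAsymm : Aᵀ = A := by
    rw [hA, splineOp, transpose_add, transpose_smul, transpose_one,
      (G.isSymm_lapMatrix (R := ℝ)).eq]
  -- step: gnorm (L φ) ≤ gnorm (A φ)
  have hLA : gnorm ((G.lapMatrix ℝ).mulVec φ) ≤ gnorm (A.mulVec φ) := by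
    apply gnorm_mono
    have hAv : A.mulVec φ = ε • φ + (G.lapMatrix ℝ).mulVec φ := by
      rw [hA, splineOp, add_mulVec, smul_mulVec, one_mulVec]
    have hpsd : 0 ≤ φ ⬝ᵥ (G.lapMatrix ℝ).mulVec φ := by
      have := (SimpleGraph.posSemidef_lapMatrix ℝ G).dotProduct_mulVec_nonneg φ
      simpa using this
    have hφφ : 0 ≤ φ ⬝ᵥ φ := dot_self_nonneg φ
    have hsymdot : (G.lapMatrix ℝ).mulVec φ ⬝ᵥ φ = φ ⬝ᵥ (G.lapMatrix ℝ).mulVec φ :=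
      dotProduct_comm _ _
    rw [hAv]
    simp only [add_dotProduct, dotProduct_add, smul_dotProduct, dotProduct_smul, smul_eq_mul]
    rw [hsymdot]
    nlinarith [mul_nonneg hε.le hpsd, mul_nonneg (mul_nonneg hε.le hε.le) hφφ]
  -- base case
  have hbase : gnorm φ ≤ Λ * gnorm (A.mulVec φ) :=
    le_trans (hS φ hφ0) (mul_le_mul_of_nonneg_left hLA hΛ.le)
  -- induction
  have hiter : ∀ m : ℕ, gnorm φ ≤ Λ ^ (2 ^ m) * gnorm ((A ^ (2 ^ m)).mulVec φ) := by
    intro m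
    induction m with
    | zero => simpa using hbase
    | succ n ih =>
      have hMs : (A ^ (2 ^ n))ᵀ = A ^ (2 ^ n) := by rw [transpose_pow, hAsymm]
      have := doubling hMs (by positivity : (0:ℝ) ≤ Λ ^ (2 ^ n)) φ ih
      have hpow : A ^ (2 ^ n) * A ^ (2 ^ n) = A ^ (2 ^ (n + 1)) := by
        rw [← pow_add, pow_succ, mul_two]
      have hΛpow : (Λ ^ (2 ^ n)) ^ 2 = Λ ^ (2 ^ (n + 1)) := by
        rw [← pow_mul, pow_succ]
      rwa [hpow, hΛpow] at this
  -- assemble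
  have hsub : (A ^ (2 ^ l)).mulVec φ = (A ^ (2 ^ l)).mulVec f - (A ^ (2 ^ l)).mulVec Y := by
    rw [hφ, mulVec_sub]
  have htri : gnorm ((A ^ (2 ^ l)).mulVec φ) ≤ 2 * gnorm ((A ^ (2 ^ l)).mulVec f) := by
    rw [hsub]
    calc gnorm ((A ^ (2 ^ l)).mulVec f - (A ^ (2 ^ l)).mulVec Y)
        ≤ gnorm ((A ^ (2 ^ l)).mulVec f) + gnorm ((A ^ (2 ^ l)).mulVec Y) := gnorm_sub_le _ _
      _ ≤ gnorm ((A ^ (2 ^ l)).mulVec f) + gnorm ((A ^ (2 ^ l)).mulVec f) := by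
          have := hYM f (fun u _ => rfl)
          linarith
      _ = 2 * gnorm ((A ^ (2 ^ l)).mulVec f) := by ring
  calc gnorm (f - Y) = gnorm φ := by rw [hφ]
    _ ≤ Λ ^ (2 ^ l) * gnorm ((A ^ (2 ^ l)).mulVec φ) := hiter l
    _ ≤ Λ ^ (2 ^ l) * (2 * gnorm ((A ^ (2 ^ l)).mulVec f)) :=
        mul_le_mul_of_nonneg_left htri (by positivity)
    _ = 2 * Λ ^ (2 ^ l) * gnorm ((A ^ (2 ^ l)).mulVec f) := by ring
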